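/- arXiv:0802.1025 — 2 statements merged into one kernel-verified Lean document; each statement's English description precedes it below -/
import Mathlib

section
/- Suppose the distribution function F has a density f and quantile function Q with f(Q(y)) ∼ y^{γ₁} L₁(1/y) as y ↓ 0, where 0 < γ₁ < 1 and L₁ is slowly varying at infinity. Then F has bounded support from the left, i.e., a = sup{x : F(x) = 0} > −∞. -/
open Set Filter

open MeasureTheory in
lemma freq_mem_of_freq_measure (A : ℕ → Set ℝ) (hAm : ∀ n, MeasurableSet (A n))
    (hAsub : ∀ n, A n ⊆ Icc (-1:ℝ) 1)
    (hfreq : ∃ᶠ n in atTop, (1:ENNReal)/2 ≤ volume (A n)) :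
    ∃ t, ∃ᶠ n in atTop, t ∈ A n := by
  set B : ℕ → Set ℝ := fun N => ⋃ n, ⋃ (_ : N ≤ n), A n with hB
  have hBm : ∀ N, MeasurableSet (B N) := fun N =>
    MeasurableSet.iUnion fun n => MeasurableSet.iUnion fun _ => hAm n
  have hBanti : Antitone B := fun N M hNM => by
    intro t ht
    simp only [hB, mem_iUnion] at ht ⊢
    obtain ⟨n, hn, htn⟩ := ht
    exact ⟨n, le_trans hNM hn, htn⟩
  have hBsub : ∀ N, B N ⊆ Icc (-1:ℝ) 1 := by
    intro N t ht
    simp only [hB, mem_iUnion] at ht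
    obtain ⟨n, _, htn⟩ := ht
    exact hAsub n htn
  have hBmeas : ∀ N, (1:ENNReal)/2 ≤ volume (B N) := by
    intro N
    obtain ⟨n, hn, hμ⟩ := (frequently_atTop.1 hfreq) N
    exact le_trans hμ (measure_mono (by
      intro t ht; simp only [hB, mem_iUnion]; exact ⟨n, hn, ht⟩))
  have hfin : ∃ N, volume (B N) ≠ ⊤ := by
    refine ⟨0, ?_⟩
    exact ne_top_of_le_ne_top (by simp) (measure_mono (hBsub 0))
  have htend := MeasureTheory.tendsto_measure_iInter_atTop
    (fun N => (hBm N).nullMeasurableSet) hBanti hfin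
  have hpos : (1:ENNReal)/2 ≤ volume (⋂ N, B N) :=
    ge_of_tendsto htend (Eventually.of_forall hBmeas)
  have hne : (⋂ N, B N).Nonempty := by
    apply MeasureTheory.nonempty_of_measure_ne_zero (μ := volume)
    intro h
    rw [h] at hpos
    simp at hpos
  obtain ⟨t, ht⟩ := hne
  refine ⟨t, frequently_atTop.2 fun N => ?_⟩
  have := mem_iInter.1 ht N
  simp only [hB, mem_iUnion] at this
  obtain ⟨n, hn, htn⟩ := this
  exact ⟨n, hn, htn⟩

open MeasureTheory in
lemma uct_lite (W : ℝ → ℝ) (hW : Measurable W)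
    (hlim : ∀ t : ℝ, Tendsto (fun x => W (x + t) - W x) atTop (nhds 0))
    {δ : ℝ} (hδ : 0 < δ) :
    ∀ᶠ x in atTop, ∀ s ∈ Icc (0:ℝ) 1, W x - δ ≤ W (x + s) := by
  by_contra hcon
  rw [Filter.not_eventually] at hcon
  have hcon' : ∀ n : ℕ, ∃ x ≥ (n:ℝ), ∃ s ∈ Icc (0:ℝ) 1, W (x + s) < W x - δ := by
    intro n
    obtain ⟨x, hx, hbad⟩ := (frequently_atTop.1 hcon) (n:ℝ)
    push_neg at hbad
    obtain ⟨s, hs, hlt⟩ := hbad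
    exact ⟨x, hx, s, hs, hlt⟩
  choose x hxge s hsmem hslt using hcon'
  have hxtop : Tendsto x atTop atTop :=
    tendsto_atTop_mono hxge tendsto_natCast_atTop_atTop
  have hx'top : Tendsto (fun n => x n + s n) atTop atTop := by
    apply tendsto_atTop_mono (fun n => ?_) hxtop
    nlinarith [(hsmem n).1]
  set I : ℕ → Set ℝ := fun n => {t ∈ Icc (0:ℝ) 1 | W (x n + t) ≤ W (x n) - δ/2} with hI
  set J : ℕ → Set ℝ := fun n =>
    {u ∈ Icc (-1:ℝ) 1 | W (x n + s n) + δ/2 ≤ W (x n + s n + u)} with hJ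
  have hIm : ∀ n, MeasurableSet (I n) := by
    intro n
    exact measurableSet_Icc.inter
      (measurableSet_le (hW.comp (measurable_const.add measurable_id)) measurable_const)
  have hJm : ∀ n, MeasurableSet (J n) := by
    intro n
    exact measurableSet_Icc.inter
      (measurableSet_le measurable_const (hW.comp ((measurable_const.add measurable_id))))
  have hcover : ∀ n, Icc (0:ℝ) 1 \ I n ⊆ (fun t => -(s n) + t) ⁻¹' (J n) := by
    intro n t ht
    obtain ⟨htmem, htI⟩ := ht
    have h1 : W (x n) - δ/2 < W (x n + t) := by
      by_contra h
      exact htI ⟨htmem, by push_neg at h; linarith⟩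
    simp only [mem_preimage, hJ, mem_setOf_eq, mem_Icc]
    constructor
    · constructor <;> [linarith [htmem.1, (hsmem n).2]; linarith [htmem.2, (hsmem n).1]]
    · have : x n + s n + (-(s n) + t) = x n + t := by ring
      rw [this]
      have := hslt n
      linarith
  have hkey : ∀ n, (1:ENNReal)/2 ≤ volume (I n) ∨ (1:ENNReal)/2 ≤ volume (J n) := by
    intro n
    by_contra h
    push_neg at h
    have h1 : volume (Icc (0:ℝ) 1) ≤ volume (I n) + volume (J n) := by
      have : Icc (0:ℝ) 1 ⊆ I n ∪ ((fun t => -(s n) + t) ⁻¹' (J n)) := by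
        intro t ht
        by_cases htI : t ∈ I n
        · exact Or.inl htI
        · exact Or.inr (hcover n ⟨ht, htI⟩)
      calc volume (Icc (0:ℝ) 1) ≤ volume (I n ∪ ((fun t => -(s n) + t) ⁻¹' (J n))) :=
            measure_mono this
        _ ≤ volume (I n) + volume ((fun t => -(s n) + t) ⁻¹' (J n)) := measure_union_le _ _
        _ = volume (I n) + volume (J n) := by rw [measure_preimage_add]
      done
    rw [Real.volume_Icc] at h1
    norm_num at h1
    have hlt : volume (I n) + volume (J n) < 1/2 + 1/2 :=
      ENNReal.add_lt_add h.1 h.2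
    rw [ENNReal.add_halves] at hlt
    exact absurd (lt_of_le_of_lt h1 hlt) (lt_irrefl _)
  have hsplit : (∃ᶠ n in atTop, (1:ENNReal)/2 ≤ volume (I n)) ∨
      (∃ᶠ n in atTop, (1:ENNReal)/2 ≤ volume (J n)) := by
    by_contra h
    push_neg at h
    obtain ⟨n, hn1, hn2⟩ := ((h.1.mono fun _ h => not_le.2 h).and (h.2.mono fun _ h => not_le.2 h)).exists
    rcases hkey n with hk | hk
    · exact hn1 hk
    · exact hn2 hk
  rcases hsplit with hfr | hfr
  · obtain ⟨t, hfreqt⟩ := freq_mem_of_freq_measure I hIm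
      (fun n => subset_trans (sep_subset _ _) (Icc_subset_Icc (by norm_num) le_rfl)) hfr
    have hev : ∀ᶠ n in atTop, -(δ/2) < W (x n + t) - W (x n) :=
      ((hlim t).comp hxtop).eventually (eventually_gt_nhds (by linarith))
    obtain ⟨n, hmem, hgt⟩ := (hfreqt.and_eventually hev).exists
    have := hmem.2
    linarith
  · obtain ⟨t, hfreqt⟩ := freq_mem_of_freq_measure J hJm (fun n => sep_subset _ _) hfr
    have hev : ∀ᶠ n in atTop, W (x n + s n + t) - W (x n + s n) < δ/2 :=
      ((hlim t).comp hx'top).eventually (eventually_lt_nhds (by linarith))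
    obtain ⟨n, hmem, hlt⟩ := (hfreqt.and_eventually hev).exists
    have := hmem.2
    linarith

set_option maxHeartbeats 2000000 in
/-- if the density-quantile function satisfies `f(Q y) ∼ y^γ₁ L₁(1/y)` as
`y ↓ 0` with `0 < γ₁ < 1` and `L₁` slowly varying, then the distribution `F` has bounded
support from the left, i.e. `{x | F x = 0}` is nonempty (so `a = sup{x : F x = 0} > -∞`). -/
theorem stmt3 (F f Q L₁ : ℝ → ℝ) (γ₁ : ℝ) (hγ₁ : γ₁ ∈ Ioo (0:ℝ) 1)
    (hFmono : Monotone F) (hFcont : Continuous F)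
    (hF0 : Tendsto F atBot (nhds 0)) (hF1 : Tendsto F atTop (nhds 1))
    (hdens : ∀ x, HasDerivAt F (f x) x)
    (hQ : ∀ y ∈ Ioo (0:ℝ) 1, Q y = sInf {x | y ≤ F x})
    (hL₁ : ∀ t > (0:ℝ), Tendsto (fun x => L₁ (t * x) / L₁ x) atTop (nhds 1))
    (h0 : Tendsto (fun y => f (Q y) / (y ^ γ₁ * L₁ (1 / y)))
      (nhdsWithin 0 (Ioi 0)) (nhds 1)) :
    {x : ℝ | F x = 0}.Nonempty := by
  obtain ⟨hγ₁0, hγ₁1⟩ := hγ₁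
  set Q₀ : ℝ → ℝ := fun y => sInf {x | y ≤ F x} with hQ₀def
  have hQeq : ∀ y : ℝ, 0 < y → y < 1 → Q y = Q₀ y := fun y h1 h2 => hQ y ⟨h1, h2⟩
  have hFnonneg : ∀ x, 0 ≤ F x := fun x =>
    le_of_tendsto hF0 (eventually_atBot.2 ⟨x, fun z hz => hFmono hz⟩)
  have hSne : ∀ y : ℝ, y < 1 → {x | y ≤ F x}.Nonempty := by
    intro y hy
    obtain ⟨x, hx⟩ := (hF1.eventually (eventually_gt_nhds hy)).exists
    exact ⟨x, le_of_lt hx⟩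
  have hSbdd : ∀ y : ℝ, 0 < y → BddBelow {x | y ≤ F x} := by
    intro y hy
    obtain ⟨x₀, hx₀⟩ := eventually_atBot.1 (hF0.eventually (eventually_lt_nhds hy))
    exact ⟨x₀, fun z hz => le_of_not_gt fun h => absurd hz (not_le.2 (hx₀ z h.le))⟩
  have hSclosed : ∀ y : ℝ, IsClosed {x | y ≤ F x} :=
    fun y => isClosed_le continuous_const hFcont
  have hQmem : ∀ y : ℝ, 0 < y → y < 1 → y ≤ F (Q₀ y) := fun y h1 h2 =>
    (hSclosed y).csInf_mem (hSne y h2) (hSbdd y h1)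
  have hQle : ∀ y : ℝ, 0 < y → ∀ x, y ≤ F x → Q₀ y ≤ x := fun y hy x hx =>
    csInf_le (hSbdd y hy) hx
  have hFQ : ∀ y : ℝ, 0 < y → y < 1 → F (Q₀ y) = y := by
    intro y h1 h2
    refine le_antisymm ?_ (hQmem y h1 h2)
    by_contra h
    push_neg at h
    have hopen : IsOpen {x | y < F x} := isOpen_lt continuous_const hFcont
    obtain ⟨η, hη, hball⟩ := Metric.isOpen_iff.1 hopen _ h
    have hmem : Q₀ y - η/2 ∈ {x | y ≤ F x} := by
      have hb : Q₀ y - η/2 ∈ Metric.ball (Q₀ y) η := by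
        rw [Metric.mem_ball, Real.dist_eq, abs_lt]
        constructor <;> linarith
      exact le_of_lt (by simpa using hball hb)
    have := hQle y h1 _ hmem
    linarith
  have hxltQ : ∀ y : ℝ, 0 < y → ∀ x, x < Q₀ y → F x < y := by
    intro y hy x hx
    by_contra h
    push_neg at h
    exact absurd (hQle y hy x h) (not_le.2 hx)
  have hQ₀mono : ∀ y1 y2 : ℝ, 0 < y1 → y1 ≤ y2 → y2 < 1 → Q₀ y1 ≤ Q₀ y2 := by
    intro y1 y2 h1 h12 h2
    exact csInf_le_csInf (hSbdd y1 h1) (hSne y2 h2) fun x hx => le_trans h12 hx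
  have hfnonneg : ∀ x, 0 ≤ f x := by
    intro x
    have hterm : Tendsto (slope F x) (nhdsWithin x (Ioi x)) (nhds (f x)) :=
      (hasDerivAt_iff_tendsto_slope.1 (hdens x)).mono_left
        (nhdsWithin_mono x fun z hz => ne_of_gt hz)
    refine ge_of_tendsto hterm ?_
    filter_upwards [self_mem_nhdsWithin] with z hz
    simp only [slope_def_field]
    have h1 : F x ≤ F z := hFmono (le_of_lt hz)
    have h2 : (0:ℝ) < z - x := by simp only [mem_Ioi] at hz; linarith
    exact div_nonneg (by linarith) h2.le
  -- good region
  have hball2 : {y : ℝ | |f (Q y) / (y ^ γ₁ * L₁ (1/y)) - 1| < 1/2} ∈ nhdsWithin 0 (Ioi 0) := by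
    have h2 : ∀ᶠ z in nhds (1:ℝ), |z - 1| < 1/2 := by
      have : Metric.ball (1:ℝ) (1/2) ∈ nhds (1:ℝ) := Metric.ball_mem_nhds _ (by norm_num)
      filter_upwards [this] with z hz
      rwa [Metric.mem_ball, Real.dist_eq] at hz
    exact h0.eventually h2
  obtain ⟨ε₁, hε₁mem, hsub⟩ := mem_nhdsGT_iff_exists_Ioo_subset.1 hball2
  set ε₀ : ℝ := min ε₁ (1/2) with hε₀def
  have hε₀pos : 0 < ε₀ := lt_min hε₁mem (by norm_num)
  have hε₀le : ε₀ ≤ 1/2 := min_le_right _ _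
  have hgood : ∀ y : ℝ, 0 < y → y < ε₀ →
      0 < y ^ γ₁ * L₁ (1/y) ∧ 0 < f (Q₀ y) ∧
      1/2 < f (Q₀ y) / (y ^ γ₁ * L₁ (1/y)) ∧ f (Q₀ y) / (y ^ γ₁ * L₁ (1/y)) < 3/2 := by
    intro y hy1 hy2
    have hy1' : y < 1 := lt_of_lt_of_le (lt_of_lt_of_le hy2 hε₀le) (by norm_num)
    have hmem : y ∈ Ioo (0:ℝ) ε₁ := ⟨hy1, lt_of_lt_of_le hy2 (min_le_left _ _)⟩
    have habs := hsub hmem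
    rw [mem_setOf_eq, hQeq y hy1 hy1', abs_lt] at habs
    set g := y ^ γ₁ * L₁ (1/y) with hg
    have hrat1 : 1/2 < f (Q₀ y) / g := by linarith [habs.1]
    have hrat2 : f (Q₀ y) / g < 3/2 := by linarith [habs.2]
    have hgne : g ≠ 0 := by
      intro h
      rw [h, div_zero] at hrat1
      linarith
    have hgpos : 0 < g := by
      rcases lt_or_gt_of_ne hgne with h | h
      · exfalso
        have : f (Q₀ y) / g ≤ 0 := div_nonpos_of_nonneg_of_nonpos (hfnonneg _) h.le
        linarith
      · exact h
    refine ⟨hgpos, ?_, hrat1, hrat2⟩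
    have h5 := (lt_div_iff₀ hgpos).1 hrat1
    linarith
  have hytop : Tendsto (fun y : ℝ => 1/y) (nhdsWithin 0 (Ioi 0)) atTop := by
    simpa [one_div] using tendsto_inv_nhdsGT_zero
  have hmulmap : ∀ t : ℝ, 0 < t →
      Tendsto (fun y => t * y) (nhdsWithin 0 (Ioi 0)) (nhdsWithin 0 (Ioi 0)) := by
    intro t ht
    apply tendsto_nhdsWithin_of_tendsto_nhds_of_eventually_within
    · have h1 : Tendsto (fun y : ℝ => t * y) (nhds 0) (nhds (t * 0)) :=
        (continuous_const.mul continuous_id).tendsto 0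
      simpa using h1.mono_left nhdsWithin_le_nhds
    · filter_upwards [self_mem_nhdsWithin] with y hy
      exact mul_pos ht hy
  have hlimh : ∀ t : ℝ, 0 < t →
      Tendsto (fun y => f (Q₀ (t * y)) / f (Q₀ y)) (nhdsWithin 0 (Ioi 0))
        (nhds (t ^ γ₁)) := by
    intro t ht
    have hA : Tendsto (fun y => f (Q (t * y)) / ((t*y) ^ γ₁ * L₁ (1/(t*y))))
        (nhdsWithin 0 (Ioi 0)) (nhds 1) := h0.comp (hmulmap t ht)
    have hC : Tendsto (fun y => (f (Q y) / (y ^ γ₁ * L₁ (1/y)))⁻¹)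
        (nhdsWithin 0 (Ioi 0)) (nhds 1) := by
      simpa using h0.inv₀ one_ne_zero
    have hB : Tendsto (fun y : ℝ => t ^ γ₁ * (L₁ ((1/t) * (1/y)) / L₁ (1/y)))
        (nhdsWithin 0 (Ioi 0)) (nhds (t ^ γ₁ * 1)) :=
      tendsto_const_nhds.mul ((hL₁ (1/t) (by positivity)).comp hytop)
    have hprod := (hA.mul hB).mul hC
    rw [show (1:ℝ) * (t ^ γ₁ * 1) * 1 = t ^ γ₁ by ring] at hprod
    refine hprod.congr' ?_
    have hmem : Ioo (0:ℝ) (min ε₀ (ε₀/t)) ∈ nhdsWithin 0 (Ioi 0) :=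
      Ioo_mem_nhdsGT_of_mem ⟨le_refl _, by positivity⟩
    filter_upwards [hmem] with y hy
    obtain ⟨hy0, hylt⟩ := hy
    have hyε : y < ε₀ := lt_of_lt_of_le hylt (min_le_left _ _)
    have htyε : t * y < ε₀ := by
      have := lt_of_lt_of_le hylt (min_le_right _ _)
      calc t * y < t * (ε₀ / t) := by exact mul_lt_mul_of_pos_left this ht
        _ = ε₀ := by field_simp
    have hty0 : 0 < t * y := mul_pos ht hy0
    have h1 := hgood y hy0 hyε
    have h2 := hgood (t*y) hty0 htyε
    have hylt1 : y < 1 := by nlinarith [hε₀le]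
    have htylt1 : t * y < 1 := by nlinarith [hε₀le]
    rw [hQeq y hy0 hylt1, hQeq (t*y) hty0 htylt1]
    -- now pure algebra
    have hgy : 0 < y ^ γ₁ * L₁ (1/y) := h1.1
    have hgty : 0 < (t*y) ^ γ₁ * L₁ (1/(t*y)) := h2.1
    have hfy : 0 < f (Q₀ y) := h1.2.1
    have hyp : (0:ℝ) < y ^ γ₁ := Real.rpow_pos_of_pos hy0 _
    have htp : (0:ℝ) < t ^ γ₁ := Real.rpow_pos_of_pos ht _
    have hLy : L₁ (1/y) ≠ 0 := by
      intro h
      rw [h, mul_zero] at hgy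
      exact lt_irrefl _ hgy
    have hLty : L₁ (1/(t*y)) ≠ 0 := by
      intro h
      rw [h, mul_zero] at hgty
      exact lt_irrefl _ hgty
    have hrpow : (t*y) ^ γ₁ = t ^ γ₁ * y ^ γ₁ := Real.mul_rpow ht.le hy0.le
    have hinv : 1/(t*y) = (1/t) * (1/y) := by field_simp
    rw [hrpow, hinv]
    field_simp
  -- the additive slowly-varying function W
  set AA : ℝ → ℝ := fun x => Q₀ (min (Real.exp (-x)) (1/2)) with hAAdef
  have hAAanti : Antitone AA := by
    intro x1 x2 h12
    refine hQ₀mono _ _ ?_ ?_ ?_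
    · exact lt_min (Real.exp_pos _) (by norm_num)
    · exact min_le_min (Real.exp_le_exp.2 (by linarith)) le_rfl
    · exact lt_of_le_of_lt (min_le_right _ _) (by norm_num)
  have hfmeas : Measurable f := by
    have hfd : f = deriv F := funext fun x => ((hdens x).deriv).symm
    rw [hfd]
    exact measurable_deriv F
  set W : ℝ → ℝ := fun x => Real.log (f (AA x)) + γ₁ * x with hWdef
  have hWmeas : Measurable W :=
    (Real.measurable_log.comp (hfmeas.comp hAAanti.measurable)).add
      (measurable_const.mul measurable_id)
  set x₂ : ℝ := max (Real.log 2) (-Real.log ε₀) + 1 with hx₂def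
  have hreg : ∀ x : ℝ, x₂ ≤ x → Real.exp (-x) < ε₀ ∧ Real.exp (-x) < 1/2 := by
    intro x hx
    constructor
    · rw [show ε₀ = Real.exp (Real.log ε₀) from (Real.exp_log hε₀pos).symm,
        Real.exp_lt_exp]
      have hle : -Real.log ε₀ + 1 ≤ x₂ := by
        rw [hx₂def]
        nlinarith [le_max_right (Real.log 2) (-Real.log ε₀)]
      linarith [le_trans hle hx]
    · rw [show (1/2:ℝ) = Real.exp (Real.log (1/2)) from (Real.exp_log (by norm_num)).symm,
        Real.exp_lt_exp]
      have h2 : Real.log (1/2) = -Real.log 2 := by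
        rw [one_div, Real.log_inv]
      have hle : Real.log 2 + 1 ≤ x₂ := by
        rw [hx₂def]
        nlinarith [le_max_left (Real.log 2) (-Real.log ε₀)]
      have : Real.log 2 + 1 ≤ x := le_trans hle hx
      rw [h2]
      linarith
  have hAAeq : ∀ x : ℝ, x₂ ≤ x → AA x = Q₀ (Real.exp (-x)) := by
    intro x hx
    simp only [hAAdef]
    rw [min_eq_left (hreg x hx).2.le]
  have hWeq : ∀ x : ℝ, x₂ ≤ x → W x = Real.log (f (Q₀ (Real.exp (-x)))) + γ₁ * x := by
    intro x hx
    simp only [hWdef, hAAeq x hx]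
  have hWlim : ∀ t : ℝ, Tendsto (fun x => W (x + t) - W x) atTop (nhds 0) := by
    intro t
    set c : ℝ := Real.exp (-t) with hcdef
    have hc : 0 < c := Real.exp_pos _
    have hexp : Tendsto (fun x : ℝ => Real.exp (-x)) atTop (nhdsWithin 0 (Ioi 0)) := by
      apply tendsto_nhdsWithin_of_tendsto_nhds_of_eventually_within
      · exact Real.tendsto_exp_atBot.comp tendsto_neg_atTop_atBot
      · exact Eventually.of_forall fun x => Real.exp_pos _
    have hcomp : Tendsto (fun x : ℝ => f (Q₀ (c * Real.exp (-x))) / f (Q₀ (Real.exp (-x))))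
        atTop (nhds (c ^ γ₁)) := (hlimh c hc).comp hexp
    have hcpow : (0:ℝ) < c ^ γ₁ := Real.rpow_pos_of_pos hc _
    have hlog : Tendsto (fun x : ℝ =>
        Real.log (f (Q₀ (c * Real.exp (-x))) / f (Q₀ (Real.exp (-x)))) + γ₁ * t)
        atTop (nhds (Real.log (c ^ γ₁) + γ₁ * t)) :=
      (((Real.continuousAt_log (ne_of_gt hcpow)).tendsto).comp hcomp).add tendsto_const_nhds
    have hval : Real.log (c ^ γ₁) + γ₁ * t = 0 := by
      rw [Real.log_rpow hc, hcdef, Real.log_exp]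
      ring
    rw [hval] at hlog
    refine hlog.congr' ?_
    filter_upwards [eventually_ge_atTop (max x₂ (x₂ - t))] with x hx
    have hx1 : x₂ ≤ x := le_trans (le_max_left _ _) hx
    have hx2 : x₂ ≤ x + t := by
      have := le_trans (le_max_right _ _) hx
      linarith
    have hce : c * Real.exp (-x) = Real.exp (-(x+t)) := by
      rw [hcdef, ← Real.exp_add]
      ring_nf
    have hy1 : (0:ℝ) < Real.exp (-x) := Real.exp_pos _
    have hy2 : Real.exp (-x) < ε₀ := (hreg x hx1).1
    have hty1 : (0:ℝ) < c * Real.exp (-x) := mul_pos hc hy1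
    have hty2 : c * Real.exp (-x) < ε₀ := by rw [hce]; exact (hreg _ hx2).1
    have hf1 : 0 < f (Q₀ (Real.exp (-x))) := (hgood _ hy1 hy2).2.1
    have hf2 : 0 < f (Q₀ (c * Real.exp (-x))) := (hgood _ hty1 hty2).2.1
    rw [hWeq _ hx2, hWeq _ hx1, ← hce, Real.log_div (ne_of_gt hf2) (ne_of_gt hf1)]
    ring
  -- apply the uniform lemma
  set δ : ℝ := (1 - γ₁)/2 with hδdef
  have hδpos : 0 < δ := by simp only [hδdef]; linarith
  obtain ⟨x₃, hx₃⟩ := eventually_atTop.1 (uct_lite W hWmeas hWlim hδpos)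
  set x₁ : ℝ := max x₃ (max x₂ 1) with hx₁def
  have hx₁x₂ : x₂ ≤ x₁ := le_trans (le_max_left _ _) (le_max_right _ _)
  have hx₁x₃ : x₃ ≤ x₁ := le_max_left _ _
  have hx₁1 : (1:ℝ) ≤ x₁ := le_trans (le_max_right _ _) (le_max_right _ _)
  have hstep : ∀ n : ℕ, W x₁ - n * δ ≤ W (x₁ + n) := by
    intro n
    induction n with
    | zero => simp
    | succ n ih =>
      have h1 := hx₃ (x₁ + n) (by linarith [hx₁x₃, Nat.cast_nonneg (α := ℝ) n] : x₃ ≤ x₁ + n) 1 (by norm_num)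
      push_cast
      push_cast at ih
      have : x₁ + n + 1 = x₁ + (n + 1) := by ring
      rw [this] at h1
      linarith
  have hlow : ∀ z : ℝ, x₁ ≤ z → W x₁ - (z - x₁ + 1) * δ ≤ W z := by
    intro z hz
    set n : ℕ := ⌊z - x₁⌋₊ with hndef
    have hn1 : (n:ℝ) ≤ z - x₁ := Nat.floor_le (by linarith)
    have hn2 : z - x₁ < n + 1 := Nat.lt_floor_add_one _
    have hs1 : 0 ≤ z - x₁ - n := by linarith
    have hs2 : z - x₁ - n ≤ 1 := by linarith
    have h1 := hx₃ (x₁ + n) (by linarith [Nat.cast_nonneg (α := ℝ) n]) (z - x₁ - n) ⟨hs1, hs2⟩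
    have h2 : x₁ + n + (z - x₁ - n) = z := by ring
    rw [h2] at h1
    have := hstep n
    nlinarith [hδpos]
  -- lower bound on density-quantile
  set γ₂ : ℝ := γ₁ + δ with hγ₂def
  have hγ₂pos : 0 < γ₂ := by simp only [hγ₂def]; linarith
  have hγ₂lt : γ₂ < 1 := by rw [hγ₂def, hδdef]; linarith
  set c₀ : ℝ := Real.exp (W x₁ + δ * x₁ - δ) with hc₀def
  have hc₀pos : 0 < c₀ := Real.exp_pos _
  set yb : ℝ := Real.exp (-x₁) with hybdef
  have hybpos : 0 < yb := Real.exp_pos _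
  have hybε : yb < ε₀ := (hreg x₁ hx₁x₂).1
  have hyblt1 : yb < 1 := by
    calc yb < ε₀ := hybε
      _ ≤ 1/2 := hε₀le
      _ < 1 := by norm_num
  have hdens_low : ∀ y : ℝ, 0 < y → y ≤ yb → c₀ * y ^ γ₂ ≤ f (Q₀ y) := by
    intro y hy hyyb
    set z : ℝ := -Real.log y with hzdef
    have hz1 : x₁ ≤ z := by
      rw [hzdef]
      have hlog : Real.log y ≤ -x₁ := by
        have h := Real.log_le_log hy hyyb
        rwa [hybdef, Real.log_exp] at h
      linarith
    have hez : Real.exp (-z) = y := by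
      rw [hzdef, neg_neg, Real.exp_log hy]
    have hW1 := hlow z hz1
    have hW2 := hWeq z (le_trans hx₁x₂ hz1)
    rw [hez] at hW2
    have hfp : 0 < f (Q₀ y) := by
      refine (hgood y hy ?_).2.1
      exact lt_of_le_of_lt hyyb hybε
    have hlogf : Real.log (f (Q₀ y)) = W z - γ₁ * z := by rw [hW2]; ring
    have hkey : W x₁ + δ * x₁ - δ - γ₂ * z ≤ Real.log (f (Q₀ y)) := by
      rw [hlogf, hγ₂def]
      linarith [hW1]
    have hy_rpow : y ^ γ₂ = Real.exp (-(γ₂ * z)) := by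
      rw [Real.rpow_def_of_pos hy, hzdef]
      ring_nf
    calc c₀ * y ^ γ₂ = Real.exp (W x₁ + δ * x₁ - δ - γ₂ * z) := by
          rw [hc₀def, hy_rpow, ← Real.exp_add]
          ring_nf
      _ ≤ Real.exp (Real.log (f (Q₀ y))) := Real.exp_le_exp.2 hkey
      _ = f (Q₀ y) := Real.exp_log hfp
  -- mean value step
  have hQdiff : ∀ y1 y2 : ℝ, 0 < y1 → y1 < y2 → y2 ≤ yb →
      Q₀ y2 - Q₀ y1 ≤ (y2 - y1) / (c₀ * y1 ^ γ₂) := by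
    intro y1 y2 hy1 hy12 hy2b
    have hy2lt1 : y2 < 1 := lt_of_le_of_lt hy2b hyblt1
    have hy1lt1 : y1 < 1 := lt_trans hy12 hy2lt1
    have hFa : F (Q₀ y1) = y1 := hFQ y1 hy1 hy1lt1
    have hFb : F (Q₀ y2) = y2 := hFQ y2 (lt_trans hy1 hy12) hy2lt1
    have hab : Q₀ y1 < Q₀ y2 := by
      rcases lt_or_eq_of_le (hQ₀mono y1 y2 hy1 hy12.le hy2lt1) with h | h
      · exact h
      · exfalso
        rw [h, hFb] at hFa
        linarith
    obtain ⟨c, hcmem, hslope⟩ :=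
      exists_hasDerivAt_eq_slope F f hab hFcont.continuousOn fun x _ => hdens x
    rw [hFa, hFb] at hslope
    have hfcpos : 0 < f c := by
      rw [hslope]
      exact div_pos (by linarith) (by linarith [hcmem.1, hcmem.2])
    set y' : ℝ := F c with hy'def
    have hy'1 : y1 ≤ y' := by rw [← hFa]; exact hFmono hcmem.1.le
    have hy'2 : y' ≤ y2 := by rw [← hFb]; exact hFmono hcmem.2.le
    have hy'pos : 0 < y' := lt_of_lt_of_le hy1 hy'1
    have hQy' : Q₀ y' = c := by
      refine le_antisymm (hQle y' hy'pos c le_rfl) ?_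
      by_contra hqc
      push_neg at hqc
      have hFq : F (Q₀ y') = y' := hFQ y' hy'pos (lt_of_le_of_lt hy'2 hy2lt1)
      have h1 : Tendsto (slope F c) (nhdsWithin c (Iio c)) (nhds (f c)) :=
        (hasDerivAt_iff_tendsto_slope.1 (hdens c)).mono_left
          (nhdsWithin_mono c fun z hz => ne_of_lt hz)
      have h2 : slope F c =ᶠ[nhdsWithin c (Iio c)] fun _ => 0 := by
        filter_upwards [Ioo_mem_nhdsLT_of_mem (⟨hqc, le_rfl⟩ : c ∈ Ioc (Q₀ y') c)]
          with z hz
        have hz1 : F (Q₀ y') ≤ F z := hFmono hz.1.le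
        have hz2 : F z ≤ F c := hFmono hz.2.le
        have : F z = F c := by rw [hFq] at hz1; rw [← hy'def] at hz2 ⊢; linarith
        simp [slope_def_field, this]
      have h3 : f c = 0 := tendsto_nhds_unique (h1.congr' h2) tendsto_const_nhds
      linarith
    have hflow : c₀ * y1 ^ γ₂ ≤ f c := by
      calc c₀ * y1 ^ γ₂ ≤ c₀ * y' ^ γ₂ := by
            have := Real.rpow_le_rpow hy1.le hy'1 hγ₂pos.le
            nlinarith [hc₀pos]
        _ ≤ f (Q₀ y') := hdens_low y' hy'pos (le_trans hy'2 hy2b)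
        _ = f c := by rw [hQy']
    have hba : Q₀ y2 - Q₀ y1 = (y2 - y1) / f c := by
      have hne : Q₀ y2 - Q₀ y1 ≠ 0 := ne_of_gt (by linarith)
      rw [eq_div_iff (ne_of_gt hfcpos), hslope]
      field_simp
    rw [hba]
    apply div_le_div_of_nonneg_left (by linarith) (by positivity) hflow
  -- telescoping
  set ρ : ℝ := (1/2 : ℝ) ^ (1 - γ₂) with hρdef
  have hρpos : 0 < ρ := Real.rpow_pos_of_pos (by norm_num) _
  have hρlt1 : ρ < 1 := Real.rpow_lt_one (by norm_num) (by norm_num) (by linarith)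
  set CC : ℝ := (yb/2) ^ (1 - γ₂) / c₀ with hCCdef
  have hCCpos : 0 < CC := div_pos (Real.rpow_pos_of_pos (by positivity) _) hc₀pos
  set u : ℕ → ℝ := fun n => yb / 2 ^ n with hudef
  have hupos : ∀ n, 0 < u n := fun n => by positivity
  have hu0 : u 0 = yb := by simp [hudef]
  have hustep : ∀ k : ℕ, Q₀ (u k) - Q₀ (u (k+1)) ≤ CC * ρ ^ k := by
    intro k
    have h1 : u (k+1) < u k := by
      rw [hudef]
      apply div_lt_div_of_pos_left hybpos (by positivity)
      exact pow_lt_pow_right₀ (by norm_num) (by omega)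
    have h2 : u k ≤ yb := by
      rw [hudef]
      calc yb / 2 ^ k ≤ yb / 1 := by
            apply div_le_div_of_nonneg_left hybpos.le (by norm_num) (one_le_pow₀ (by norm_num))
        _ = yb := by ring
    have h3 := hQdiff (u (k+1)) (u k) (hupos _) h1 h2
    have hdiff : u k - u (k+1) = yb / 2 ^ (k+1) := by
      rw [hudef]
      field_simp
      ring
    have haval : u (k+1) = (yb/2) * (1/2)^k := by
      simp only [hudef]
      rw [pow_succ, one_div, inv_pow]
      ring
    have hbound : (u k - u (k+1)) / (c₀ * u (k+1) ^ γ₂) = CC * ρ ^ k := by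
      have ha : (0:ℝ) < u (k+1) := hupos _
      have hrw : u (k+1) ^ γ₂ = u (k+1) * u (k+1) ^ (γ₂ - 1) := by
        rw [← Real.rpow_one_add' (by positivity)]
        · ring_nf
        · intro h; rw [show (1:ℝ) + (γ₂ - 1) = γ₂ by ring] at h; linarith
      have hexp : u (k+1) ^ (1 - γ₂) = (yb/2) ^ (1-γ₂) * ρ ^ k := by
        rw [haval, Real.mul_rpow (by positivity) (by positivity)]
        congr 1
        rw [← Real.rpow_natCast ((1:ℝ)/2) k, ← Real.rpow_mul (by norm_num),
          mul_comm, Real.rpow_mul (by norm_num), Real.rpow_natCast, hρdef]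
      have hdd : u k - u (k+1) = u (k+1) := by
        rw [hdiff]
      rw [hdd, hrw]
      rw [hCCdef]
      have h9 : u (k+1) * u (k+1) ^ (γ₂-1) ≠ 0 := by
        have := Real.rpow_pos_of_pos ha (γ₂ - 1)
        positivity
      rw [div_eq_iff (by positivity)]
      have h10 : (yb/2) ^ (1-γ₂) / c₀ * ρ^k * (c₀ * (u (k+1) * u (k+1)^(γ₂-1)))
          = ((yb/2)^(1-γ₂) * ρ^k) * (u (k+1) * u (k+1)^(γ₂-1)) := by
        field_simp
      rw [h10, ← hexp]
      have h11 : u (k+1) ^ (1-γ₂) * (u (k+1) * u (k+1)^(γ₂-1))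
          = u (k+1) * (u (k+1) ^ (1-γ₂) * u (k+1)^(γ₂-1)) := by ring
      rw [h11, ← Real.rpow_add ha]
      norm_num
    rw [← hbound]
    exact h3
  have hQbound : ∀ n : ℕ, Q₀ yb - Q₀ (u n) ≤ (CC/(1-ρ)) * (1 - ρ^n) := by
    intro n
    induction n with
    | zero => simp [hu0]
    | succ n ih =>
      have h1 := hustep n
      have hkey : (CC/(1-ρ)) * (1 - ρ^n) + CC * ρ^n = (CC/(1-ρ)) * (1 - ρ^(n+1)) := by
        have hne : 1 - ρ ≠ 0 := by linarith
        field_simp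
        ring
      calc Q₀ yb - Q₀ (u (n+1))
          = (Q₀ yb - Q₀ (u n)) + (Q₀ (u n) - Q₀ (u (n+1))) := by ring
        _ ≤ (CC/(1-ρ)) * (1 - ρ^n) + CC * ρ^n := add_le_add ih h1
        _ = (CC/(1-ρ)) * (1 - ρ^(n+1)) := hkey
  have hQlb : ∀ n : ℕ, Q₀ yb - CC/(1-ρ) ≤ Q₀ (u n) := by
    intro n
    have h1 := hQbound n
    have h2 : (CC/(1-ρ)) * (1 - ρ^n) ≤ CC/(1-ρ) := by
      have hc : 0 < CC/(1-ρ) := div_pos hCCpos (by linarith)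
      nlinarith [pow_pos hρpos n]
    linarith
  -- conclusion
  set m : ℝ := Q₀ yb - CC/(1-ρ) - 1 with hmdef
  have hFm : ∀ n : ℕ, F m < u n := by
    intro n
    apply hxltQ (u n) (hupos n)
    have := hQlb n
    rw [hmdef]
    linarith
  have hu_tend : Tendsto u atTop (nhds 0) := by
    rw [hudef]
    have h1 : Tendsto (fun n : ℕ => ((1:ℝ)/2) ^ n) atTop (nhds 0) :=
      tendsto_pow_atTop_nhds_zero_of_lt_one (by norm_num) (by norm_num)
    have h2 := h1.const_mul yb
    rw [mul_zero] at h2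
    refine h2.congr fun n => ?_
    field_simp
    rw [← mul_pow]; norm_num
  have hFm0 : F m ≤ 0 := ge_of_tendsto hu_tend (Eventually.of_forall fun n => (hFm n).le)
  exact ⟨m, le_antisymm hFm0 (hFnonneg m)⟩
end

section
/- Let F be a distribution function with positive density f on (a,b) and quantile function Q, satisfying sup_{y∈(0,1)} y(1−y)|f'(Q(y))|/f²(Q(y)) ≤ γ. Then for all y, θ ∈ (0,1), f(Q(y))/f(Q(θ)) ≤ { (y∨θ)/(y∧θ) · (1−(y∧θ))/(1−(y∨θ)) }^{γ}. -/
open Set Filter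

/-- Csörgő–Révész 1978, Lemma 1: if `F` has positive density `f` on `(a,b)`
with derivative `f'`, quantile function `Q`, and
`sup_y y(1-y)|f'(Q y)|/f(Q y)² ≤ γ`, then for all `y, θ ∈ (0,1)`,
`f(Q y)/f(Q θ) ≤ ((y∨θ)/(y∧θ) · (1-(y∧θ))/(1-(y∨θ)))^γ`. -/
theorem stmt9 (a b : ℝ) (F f f' Q : ℝ → ℝ) (γ : ℝ) (hγ : 0 < γ) (hab : a < b)
    (hF : ∀ x ∈ Ioo a b, HasDerivAt F (f x) x)
    (hf : ∀ x ∈ Ioo a b, HasDerivAt f (f' x) x)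
    (hfpos : ∀ x ∈ Ioo a b, 0 < f x)
    (hQmem : ∀ y ∈ Ioo (0:ℝ) 1, Q y ∈ Ioo a b ∧ F (Q y) = y)
    (hCsR3 : ∀ y ∈ Ioo (0:ℝ) 1, y * (1 - y) * |f' (Q y)| / (f (Q y))^2 ≤ γ) :
    ∀ y ∈ Ioo (0:ℝ) 1, ∀ θ ∈ Ioo (0:ℝ) 1,
      f (Q y) / f (Q θ) ≤
        ((max y θ / min y θ) * ((1 - min y θ) / (1 - max y θ))) ^ γ := by
  -- F is strictly monotone on (a,b)
  have hFmono : StrictMonoOn F (Ioo a b) :=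
    strictMonoOn_of_deriv_pos (convex_Ioo a b)
      (fun x hx => (hF x hx).continuousAt.continuousWithinAt)
      (by
        rw [interior_Ioo]
        intro x hx
        rw [(hF x hx).deriv]
        exact hfpos x hx)
  -- Q is continuous on (0,1)
  have hQcont : ∀ y ∈ Ioo (0:ℝ) 1, ContinuousAt Q y := by
    intro y hy
    obtain ⟨hQab, hFQ⟩ := hQmem y hy
    rw [Metric.continuousAt_iff]
    intro ε hε
    set x₁ := (max a (Q y - ε) + Q y) / 2 with hx₁def
    set x₂ := (min b (Q y + ε) + Q y) / 2 with hx₂def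
    have hm1 : max a (Q y - ε) < Q y := max_lt hQab.1 (by linarith)
    have hm1a : a ≤ max a (Q y - ε) := le_max_left _ _
    have hm1e : Q y - ε ≤ max a (Q y - ε) := le_max_right _ _
    have hm2 : Q y < min b (Q y + ε) := lt_min hQab.2 (by linarith)
    have hm2b : min b (Q y + ε) ≤ b := min_le_left _ _
    have hm2e : min b (Q y + ε) ≤ Q y + ε := min_le_right _ _
    have hx₁mem : x₁ ∈ Ioo a b := ⟨by simp only [hx₁def]; linarith,
      by simp only [hx₁def]; linarith [hQab.2]⟩
    have hx₂mem : x₂ ∈ Ioo a b := ⟨by simp only [hx₂def]; linarith [hQab.1],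
      by simp only [hx₂def]; linarith⟩
    have hx₁lt : x₁ < Q y := by simp only [hx₁def]; linarith
    have hx₂gt : Q y < x₂ := by simp only [hx₂def]; linarith
    have hFx₁ : F x₁ < y := by
      have := hFmono hx₁mem hQab hx₁lt; rwa [hFQ] at this
    have hFx₂ : y < F x₂ := by
      have := hFmono hQab hx₂mem hx₂gt; rwa [hFQ] at this
    refine ⟨min (min (y - F x₁) (F x₂ - y)) (min y (1 - y)),
      lt_min (lt_min (by linarith) (by linarith))
        (lt_min hy.1 (by linarith [hy.2])), ?_⟩
    intro y' hy'
    rw [Real.dist_eq, abs_lt] at hy'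
    have hd1 : min (min (y - F x₁) (F x₂ - y)) (min y (1 - y)) ≤ y - F x₁ :=
      le_trans (min_le_left _ _) (min_le_left _ _)
    have hd2 : min (min (y - F x₁) (F x₂ - y)) (min y (1 - y)) ≤ F x₂ - y :=
      le_trans (min_le_left _ _) (min_le_right _ _)
    have hd3 : min (min (y - F x₁) (F x₂ - y)) (min y (1 - y)) ≤ y :=
      le_trans (min_le_right _ _) (min_le_left _ _)
    have hd4 : min (min (y - F x₁) (F x₂ - y)) (min y (1 - y)) ≤ 1 - y :=
      le_trans (min_le_right _ _) (min_le_right _ _)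
    have hy'mem : y' ∈ Ioo (0:ℝ) 1 := ⟨by linarith, by linarith⟩
    obtain ⟨hQ'ab, hFQ'⟩ := hQmem y' hy'mem
    have hl : x₁ < Q y' := by
      by_contra h
      push_neg at h
      have := hFmono.monotoneOn hQ'ab hx₁mem h
      rw [hFQ'] at this
      linarith
    have hr : Q y' < x₂ := by
      by_contra h
      push_neg at h
      have := hFmono.monotoneOn hx₂mem hQ'ab h
      rw [hFQ'] at this
      linarith
    rw [Real.dist_eq, abs_lt]
    constructor
    · have : Q y - ε < x₁ := by simp only [hx₁def]; linarith
      linarith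
    · have : x₂ < Q y + ε := by simp only [hx₂def]; linarith
      linarith
  -- Q is differentiable with derivative 1/f(Q y)
  have hQ' : ∀ y ∈ Ioo (0:ℝ) 1, HasDerivAt Q (f (Q y))⁻¹ y := by
    intro y hy
    obtain ⟨hQab, hFQ⟩ := hQmem y hy
    exact HasDerivAt.of_local_left_inverse (hQcont y hy) (hF (Q y) hQab)
      (ne_of_gt (hfpos _ hQab))
      ((isOpen_Ioo.eventually_mem hy).mono (fun z hz => (hQmem z hz).2))
  -- derivative of log (f (Q t))
  have gd : ∀ z ∈ Ioo (0:ℝ) 1,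
      HasDerivAt (fun t => Real.log (f (Q t))) (f' (Q z) / (f (Q z))^2) z := by
    intro z hz
    obtain ⟨hQab, _⟩ := hQmem z hz
    have hpos := hfpos _ hQab
    have hc : HasDerivAt (fun t => f (Q t)) (f' (Q z) * (f (Q z))⁻¹) z :=
      (hf (Q z) hQab).comp z (hQ' z hz)
    have := hc.log (ne_of_gt hpos)
    convert this using 1
    rw [pow_two, ← div_div, div_eq_mul_inv (f' (Q z)) (f (Q z))]
  -- derivative of γ(log t - log(1-t))
  have hd : ∀ z ∈ Ioo (0:ℝ) 1,
      HasDerivAt (fun t => γ * (Real.log t - Real.log (1 - t)))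
        (γ * (1/z + 1/(1-z))) z := by
    intro z hz
    have hz0 : z ≠ 0 := ne_of_gt hz.1
    have hz1 : (1:ℝ) - z ≠ 0 := ne_of_gt (by linarith [hz.2])
    have h1 : HasDerivAt (fun t : ℝ => (1:ℝ) - t) (0 - 1) z :=
      (hasDerivAt_const z 1).sub (hasDerivAt_id z)
    have h2 : HasDerivAt (fun t => Real.log (1 - t)) ((0-1)/(1-z)) z :=
      h1.log hz1
    have h3 : HasDerivAt (fun t => Real.log t - Real.log (1 - t))
        (z⁻¹ - (0-1)/(1-z)) z := (Real.hasDerivAt_log hz0).sub h2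
    have := h3.const_mul γ
    exact this.congr_deriv (by ring)
  -- derivative bound
  have hb : ∀ z ∈ Ioo (0:ℝ) 1,
      |f' (Q z) / (f (Q z))^2| ≤ γ * (1/z + 1/(1-z)) := by
    intro z hz
    obtain ⟨hQab, _⟩ := hQmem z hz
    have hf2 : 0 < (f (Q z))^2 := pow_pos (hfpos _ hQab) 2
    have hz1 : 0 < z * (1 - z) := mul_pos hz.1 (by linarith [hz.2])
    have h3 := hCsR3 z hz
    rw [div_le_iff₀ hf2] at h3
    rw [abs_div, abs_of_pos hf2]
    have habs : |f' (Q z)| / (f (Q z))^2 ≤ γ / (z * (1-z)) := by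
      rw [div_le_div_iff₀ hf2 hz1]
      nlinarith
    calc |f' (Q z)| / (f (Q z))^2 ≤ γ / (z * (1-z)) := habs
      _ = γ * (1/z + 1/(1-z)) := by
          have hz0 : z ≠ 0 := ne_of_gt hz.1
          have hz1' : (1:ℝ) - z ≠ 0 := ne_of_gt (by linarith [hz.2])
          field_simp
          ring
  -- main estimate for ordered pairs
  have key : ∀ u v : ℝ, u ∈ Ioo (0:ℝ) 1 → v ∈ Ioo (0:ℝ) 1 → u ≤ v →
      f (Q v) / f (Q u) ≤ ((v/u) * ((1-u)/(1-v)))^γ ∧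
      f (Q u) / f (Q v) ≤ ((v/u) * ((1-u)/(1-v)))^γ := by
    intro u v hu hv huv
    have hIcc : Icc u v ⊆ Ioo (0:ℝ) 1 :=
      fun t ht => ⟨lt_of_lt_of_le hu.1 ht.1, lt_of_le_of_lt ht.2 hv.2⟩
    -- D - g monotone
    have hmono1 : MonotoneOn
        (fun t => γ * (Real.log t - Real.log (1 - t)) - Real.log (f (Q t)))
        (Icc u v) := by
      apply monotoneOn_of_deriv_nonneg (convex_Icc u v)
      · intro t ht
        have hz := hIcc ht
        exact ((hd t hz).sub (gd t hz)).continuousAt.continuousWithinAt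
      · rw [interior_Icc]
        intro t ht
        have hz := hIcc (Ioo_subset_Icc_self ht)
        exact ((hd t hz).sub (gd t hz)).differentiableAt.differentiableWithinAt
      · rw [interior_Icc]
        intro t ht
        have hz := hIcc (Ioo_subset_Icc_self ht)
        rw [(show HasDerivAt (fun t => γ * (Real.log t - Real.log (1 - t)) - Real.log (f (Q t))) _ t from (hd t hz).sub (gd t hz)).deriv]
        have := hb t hz
        rw [abs_le] at this
        linarith [this.2]
    -- D + g monotone
    have hmono2 : MonotoneOn
        (fun t => γ * (Real.log t - Real.log (1 - t)) + Real.log (f (Q t)))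
        (Icc u v) := by
      apply monotoneOn_of_deriv_nonneg (convex_Icc u v)
      · intro t ht
        have hz := hIcc ht
        exact ((hd t hz).add (gd t hz)).continuousAt.continuousWithinAt
      · rw [interior_Icc]
        intro t ht
        have hz := hIcc (Ioo_subset_Icc_self ht)
        exact ((hd t hz).add (gd t hz)).differentiableAt.differentiableWithinAt
      · rw [interior_Icc]
        intro t ht
        have hz := hIcc (Ioo_subset_Icc_self ht)
        rw [(show HasDerivAt (fun t => γ * (Real.log t - Real.log (1 - t)) + Real.log (f (Q t))) _ t from (hd t hz).add (gd t hz)).deriv]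
        have := hb t hz
        rw [abs_le] at this
        linarith [this.1]
    have hmem_u : u ∈ Icc u v := ⟨le_refl u, huv⟩
    have hmem_v : v ∈ Icc u v := ⟨huv, le_refl v⟩
    have h1 := hmono1 hmem_u hmem_v huv
    have h2 := hmono2 hmem_u hmem_v huv
    simp only at h1 h2
    set L := γ * (Real.log v - Real.log (1 - v)) - γ * (Real.log u - Real.log (1 - u))
      with hL
    have hgv : Real.log (f (Q v)) - Real.log (f (Q u)) ≤ L := by
      rw [hL]; linarith
    have hgu : Real.log (f (Q u)) - Real.log (f (Q v)) ≤ L := by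
      rw [hL]; linarith
    -- rewrite L as γ * log R
    have hu0 : (0:ℝ) < u := hu.1
    have hv0 : (0:ℝ) < v := hv.1
    have h1u : (0:ℝ) < 1 - u := by linarith [hu.2]
    have h1v : (0:ℝ) < 1 - v := by linarith [hv.2]
    have hR : (0:ℝ) < (v/u) * ((1-u)/(1-v)) := by positivity
    have hlogR : Real.log ((v/u) * ((1-u)/(1-v)))
        = (Real.log v - Real.log u) + (Real.log (1-u) - Real.log (1-v)) := by
      rw [Real.log_mul (by positivity) (by positivity),
        Real.log_div (ne_of_gt hv0) (ne_of_gt hu0),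
        Real.log_div (ne_of_gt h1u) (ne_of_gt h1v)]
    have hLR : L = γ * Real.log ((v/u) * ((1-u)/(1-v))) := by
      rw [hlogR, hL]; ring
    have hfu := hfpos _ (hQmem u hu).1
    have hfv := hfpos _ (hQmem v hv).1
    have hrpow : ((v/u) * ((1-u)/(1-v)))^γ
        = Real.exp (γ * Real.log ((v/u) * ((1-u)/(1-v)))) := by
      rw [Real.rpow_def_of_pos hR]; ring_nf
    constructor
    · rw [hrpow, ← hLR]
      calc f (Q v) / f (Q u)
          = Real.exp (Real.log (f (Q v)) - Real.log (f (Q u))) := by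
            rw [Real.exp_sub, Real.exp_log hfv, Real.exp_log hfu]
        _ ≤ Real.exp L := Real.exp_le_exp.mpr hgv
    · rw [hrpow, ← hLR]
      calc f (Q u) / f (Q v)
          = Real.exp (Real.log (f (Q u)) - Real.log (f (Q v))) := by
            rw [Real.exp_sub, Real.exp_log hfu, Real.exp_log hfv]
        _ ≤ Real.exp L := Real.exp_le_exp.mpr hgu
  -- conclude
  intro y hy θ hθ
  rcases le_total y θ with h | h
  · rw [max_eq_right h, min_eq_left h]
    exact (key y θ hy hθ h).2
  · rw [max_eq_left h, min_eq_right h]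
    exact (key θ y hθ hy h).1
end
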